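/- A compact Hausdorff space is metrizable if and only if its diagonal is a Gδ subset of X × X. -/

import Mathlib

open Set Filter Topology Uniformity TopologicalSpace

theorem sneider (X : Type*) [TopologicalSpace X] [CompactSpace X] [T2Space X] :
    TopologicalSpace.MetrizableSpace X ↔
      ∃ U : ℕ → Set (X × X), (∀ n, IsOpen (U n)) ∧ Set.diagonal X = ⋂ n, U n := by
  constructor
  · intro h
    letI : MetricSpace X := TopologicalSpace.metrizableSpaceMetric X
    refine ⟨fun n => {p : X × X | dist p.1 p.2 < 1 / (n + 1)}, fun n => ?_, ?_⟩
    · exact isOpen_lt (by fun_prop) continuous_const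
    · ext ⟨x, y⟩
      simp only [Set.mem_diagonal_iff, Set.mem_iInter, Set.mem_setOf_eq]
      constructor
      · rintro rfl n
        simp [Nat.cast_add_one_pos]
      · intro h
        have hd : ¬ 0 < dist x y := by
          intro hd
          obtain ⟨n, hn⟩ := exists_nat_one_div_lt hd
          exact absurd (h n) (not_lt.2 hn.le)
        exact dist_le_zero.1 (not_lt.1 hd)
  · rintro ⟨U, hUo, hUd⟩
    have hdU : ∀ n, Set.diagonal X ⊆ U n := fun n => hUd ▸ Set.iInter_subset U n
    choose W hWo hdW hWU using fun n =>
      normal_exists_closure_subset isClosed_diagonal (hUo n) (hdU n)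
    set K : ℕ → Set (X × X) := fun n => ⋂ i ∈ Set.Iic n, closure (W i) with hK
    have hKcl : ∀ n, IsClosed (K n) := fun n =>
      isClosed_biInter fun i _ => isClosed_closure
    have hKmono : ∀ n, K (n + 1) ⊆ K n := by
      intro n
      exact Set.biInter_subset_biInter_left (Set.Iic_subset_Iic.2 (Nat.le_succ n))
    have hKmem : ∀ n, K n ∈ 𝓝ˢ (Set.diagonal X) := by
      intro n
      refine mem_nhdsSet_iff_exists.2 ⟨⋂ i ∈ Set.Iic n, W i,
        (Set.finite_Iic n).isOpen_biInter (fun i _ => hWo i),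
        Set.subset_iInter₂ fun i _ => hdW i,
        Set.iInter₂_mono fun i _ => subset_closure⟩
    have hKdiag : (⋂ n, K n) ⊆ Set.diagonal X := by
      rw [hUd]
      refine Set.iInter_mono fun n => ?_
      exact (Set.iInter₂_subset n (Set.mem_Iic.2 le_rfl)).trans (hWU n)
    have key : ∀ S : Set (X × X), IsOpen S → Set.diagonal X ⊆ S → ∃ n, K n ⊆ S := by
      intro S hS hdS
      by_contra h
      push_neg at h
      obtain ⟨p, hp⟩ := IsCompact.nonempty_iInter_of_sequence_nonempty_isCompact_isClosed
        (fun n => K n \ S)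
        (fun n => Set.diff_subset_diff_left (hKmono n))
        (fun n => Set.diff_nonempty.2 (h n))
        (((hKcl 0).sdiff hS).isCompact)
        (fun n => (hKcl n).sdiff hS)
      simp only [Set.mem_iInter, Set.mem_diff] at hp
      exact (hp 0).2 (hdS (hKdiag (Set.mem_iInter.2 fun n => (hp n).1)))
    have hbasis : (𝓝ˢ (Set.diagonal X)).HasBasis (fun _ : ℕ => True) K := by
      refine ⟨fun S => ⟨fun hS => ?_, ?_⟩⟩
      · obtain ⟨O, hO, hdO, hOS⟩ := mem_nhdsSet_iff_exists.1 hS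
        obtain ⟨n, hn⟩ := key O hO hdO
        exact ⟨n, trivial, hn.trans hOS⟩
      · rintro ⟨n, -, hn⟩
        exact mem_of_superset (hKmem n) hn
    letI us : UniformSpace X := uniformSpaceOfCompactR1
    have hU : 𝓤 X = 𝓝ˢ (Set.diagonal X) := rfl
    haveI : (𝓤 X).IsCountablyGenerated := by
      rw [hU]; exact hbasis.isCountablyGenerated
    exact UniformSpace.metrizableSpace
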